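/- Let $\mathcal{T}$ be maximal monotone on a finite dimensional Hilbert space $\mathcal{X}$ with $\Omega = \mathcal{T}^{-1}(0) \neq \emptyset$. Let $\{c_k\}$ be positive numbers bounded away from zero and $\{\mathcal{M}_k\}$ self-adjoint positive definite operators with $(1+\nu_k)\mathcal{M}_k \succeq \mathcal{M}_{k+1}$, $\mathcal{M}_k \succeq \lambda_{\min}\mathcal{I}$ for a summable nonnegative sequence $\{\nu_k\}$ and $\lambda_{\min} > 0$, with $\limsup_k \lambda_{\max}(\mathcal{M}_k) < \infty$. Let $\{z^k\}$ satisfy $\|z^{k+1} - (\mathcal{M}_k + c_k\mathcal{T})^{-1}\mathcal{M}_k z^k\|_{\mathcal{M}_k} \le \epsilon_k$ with $\sum_k \epsilon_k < \infty$. Then $\{z^k\}$ is bounded, $\mathrm{dist}_{\mathcal{M}_{k+1}}(z^{k+1}, \Omega) \le (1+\nu_k)\mathrm{dist}_{\mathcal{M}_k}(z^k, \Omega) + (1+\nu_k)\epsilon_k$ for all $k$, and $z^k$ converges to some $z^\infty$ with $0 \in \mathcal{T}(z^\infty)$. -/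

import Mathlib

open scoped RealInnerProductSpace
open Filter

lemma aux_expand {X : Type*} [NormedAddCommGroup X] [InnerProductSpace ℝ X]
    (B : X →ₗ[ℝ] X) (hsym : ∀ x y : X, ⟪B x, y⟫ = ⟪x, B y⟫) (x y : X) :
    ⟪x + y, B (x + y)⟫ = ⟪x, B x⟫ + 2 * ⟪x, B y⟫ + ⟪y, B y⟫ := by
  have h : ⟪y, B x⟫ = ⟪x, B y⟫ := by rw [real_inner_comm, hsym]
  rw [map_add, inner_add_left, inner_add_right, inner_add_right, h]
  ring

lemma aux_CS {X : Type*} [NormedAddCommGroup X] [InnerProductSpace ℝ X]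
    (B : X →ₗ[ℝ] X) (hsym : ∀ x y : X, ⟪B x, y⟫ = ⟪x, B y⟫)
    (hpos : ∀ x : X, 0 ≤ ⟪x, B x⟫) (x y : X) :
    ⟪x, B y⟫ ^ 2 ≤ ⟪x, B x⟫ * ⟪y, B y⟫ := by
  have key : ∀ t : ℝ, 0 ≤ ⟪y, B y⟫ * (t * t) + (2 * ⟪x, B y⟫) * t + ⟪x, B x⟫ := by
    intro t
    have h := hpos (x + t • y)
    have hx : ⟪x, B (t • y)⟫ = t * ⟪x, B y⟫ := by rw [map_smul]; exact real_inner_smul_right _ _ _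
    have hy : ⟪t • y, B (t • y)⟫ = t * (t * ⟪y, B y⟫) := by
      rw [map_smul, real_inner_smul_left, real_inner_smul_right]
    rw [aux_expand B hsym, hx, hy] at h
    nlinarith [h]
  have := discrim_le_zero key
  rw [discrim] at this
  nlinarith [this]

lemma aux_inner_le {X : Type*} [NormedAddCommGroup X] [InnerProductSpace ℝ X]
    (B : X →ₗ[ℝ] X) (hsym : ∀ x y : X, ⟪B x, y⟫ = ⟪x, B y⟫)
    (hpos : ∀ x : X, 0 ≤ ⟪x, B x⟫) (x y : X) :
    ⟪x, B y⟫ ≤ Real.sqrt ⟪x, B x⟫ * Real.sqrt ⟪y, B y⟫ := by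
  have h := aux_CS B hsym hpos x y
  have h1 : ⟪x, B y⟫ ≤ |⟪x, B y⟫| := le_abs_self _
  have h2 : |⟪x, B y⟫| = Real.sqrt (⟪x, B y⟫ ^ 2) := (Real.sqrt_sq_eq_abs _).symm
  rw [← Real.sqrt_mul (hpos x)]
  calc ⟪x, B y⟫ ≤ Real.sqrt (⟪x, B y⟫ ^ 2) := by rw [← h2]; exact h1
    _ ≤ _ := Real.sqrt_le_sqrt h

lemma aux_tri {X : Type*} [NormedAddCommGroup X] [InnerProductSpace ℝ X]
    (B : X →ₗ[ℝ] X) (hsym : ∀ x y : X, ⟪B x, y⟫ = ⟪x, B y⟫)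
    (hpos : ∀ x : X, 0 ≤ ⟪x, B x⟫) (x y : X) :
    Real.sqrt ⟪x + y, B (x + y)⟫ ≤ Real.sqrt ⟪x, B x⟫ + Real.sqrt ⟪y, B y⟫ := by
  have h1 := aux_inner_le B hsym hpos x y
  have h2 : ⟪x + y, B (x + y)⟫ ≤ (Real.sqrt ⟪x, B x⟫ + Real.sqrt ⟪y, B y⟫) ^ 2 := by
    rw [aux_expand B hsym]
    have sx := Real.sq_sqrt (hpos x)
    have sy := Real.sq_sqrt (hpos y)
    nlinarith [h1, sx, sy]
  calc Real.sqrt ⟪x + y, B (x + y)⟫ ≤ Real.sqrt ((Real.sqrt ⟪x, B x⟫ + Real.sqrt ⟪y, B y⟫) ^ 2) :=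
        Real.sqrt_le_sqrt h2
    _ = _ := Real.sqrt_sq (by positivity)


lemma aux_qf (a ν δ : ℕ → ℝ) (ha : ∀ k, 0 ≤ a k) (hν : ∀ k, 0 ≤ ν k)
    (hδ : ∀ k, 0 ≤ δ k) (hνs : Summable ν) (hδs : Summable δ)
    (hrec : ∀ k, a (k + 1) ≤ (1 + ν k) * a k + δ k) :
    ∃ L, 0 ≤ L ∧ Filter.Tendsto a Filter.atTop (nhds L) := by
  set P : ℕ → ℝ := fun k => ∏ j ∈ Finset.range k, (1 + ν j) with hPdef
  have hP1 : ∀ k, 1 ≤ P k := by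
    intro k
    simp only [hPdef]
    calc (1:ℝ) = ∏ j ∈ Finset.range k, 1 := by simp
      _ ≤ ∏ j ∈ Finset.range k, (1 + ν j) :=
        Finset.prod_le_prod (by intro j _; norm_num) (fun j _ => by linarith [hν j])
  have hPpos : ∀ k, 0 < P k := fun k => lt_of_lt_of_le one_pos (hP1 k)
  have hPsucc : ∀ k, P (k + 1) = P k * (1 + ν k) := fun k => Finset.prod_range_succ _ _
  have hPmono : Monotone P := monotone_nat_of_le_succ (fun k => by
    rw [hPsucc]; nlinarith [hPpos k, hν k])
  have hPub : ∀ k, P k ≤ Real.exp (∑' i, ν i) := by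
    intro k
    simp only [hPdef]
    calc (∏ j ∈ Finset.range k, (1 + ν j)) ≤ ∏ j ∈ Finset.range k, Real.exp (ν j) :=
          Finset.prod_le_prod (fun j _ => by linarith [hν j])
            (fun j _ => by linarith [Real.add_one_le_exp (ν j)])
      _ = Real.exp (∑ j ∈ Finset.range k, ν j) := by rw [Real.exp_sum]
      _ ≤ _ := Real.exp_le_exp.2 (Summable.sum_le_tsum _ (fun j _ => hν j) hνs)
  obtain hPdiv | ⟨Pl, hPl⟩ := tendsto_of_monotone hPmono
  · exfalso
    obtain ⟨k, hk⟩ := (hPdiv.eventually_gt_atTop (Real.exp (∑' i, ν i))).exists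
    exact absurd (hPub k) (not_le.2 hk)
  set t : ℕ → ℝ := fun k => ∑' i, δ (i + k) with htdef
  have htsummable : ∀ k, Summable (fun i => δ (i + k)) := fun k =>
    (summable_nat_add_iff k).2 hδs
  have ht0 : ∀ k, 0 ≤ t k := fun k => tsum_nonneg (fun i => hδ _)
  have htrec : ∀ k, t k = δ k + t (k + 1) := by
    intro k
    have h := Summable.tsum_eq_zero_add (htsummable k)
    simp only [htdef]
    rw [h]
    congr 1
    · simp
    · apply tsum_congr; intro b; congr 1; omega
  have httends : Tendsto t atTop (nhds 0) := by
    have heq : ∀ k, t k = (∑' i, δ i) - ∑ i ∈ Finset.range k, δ i := by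
      intro k
      have h := Summable.sum_add_tsum_nat_add k hδs
      simp only [htdef]
      linarith [h]
    have h2 : Tendsto (fun k => (∑' i, δ i) - ∑ i ∈ Finset.range k, δ i) atTop (nhds 0) := by
      have h3 := (tendsto_const_nhds (x := ∑' i, δ i) (f := atTop)).sub
        hδs.hasSum.tendsto_sum_nat
      simpa using h3
    exact h2.congr (fun k => (heq k).symm)
  set b : ℕ → ℝ := fun k => a k / P k + t k with hbdef
  have hbanti : Antitone b := by
    apply antitone_nat_of_succ_le
    intro k
    have hone : 1 ≤ P k * (1 + ν k) := by nlinarith [hP1 k, hν k]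
    have h1 : a (k + 1) / P (k + 1) ≤ a k / P k + δ k := by
      rw [hPsucc]
      have hpos : (0:ℝ) < P k * (1 + ν k) := by nlinarith [hPpos k, hν k]
      rw [div_le_iff₀ hpos]
      have heq2 : (a k / P k + δ k) * (P k * (1 + ν k)) =
          (1 + ν k) * a k + δ k * (P k * (1 + ν k)) := by
        field_simp [(hPpos k).ne']
      rw [heq2]
      have h2 : δ k ≤ δ k * (P k * (1 + ν k)) := le_mul_of_one_le_right (hδ k) hone
      linarith [hrec k]
    simp only [hbdef]
    have h3 := htrec k
    linarith
  have hb0 : ∀ k, 0 ≤ b k := fun k =>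
    add_nonneg (div_nonneg (ha k) (hPpos k).le) (ht0 k)
  obtain hbdiv | ⟨Bl, hBl⟩ := tendsto_of_antitone hbanti
  · exfalso
    obtain ⟨k, hk⟩ := (hbdiv.eventually_lt_atBot 0).exists
    exact absurd (hb0 k) (not_le.2 hk)
  refine ⟨(Bl - 0) * Pl, ?_, ?_⟩
  · have hBl0 : 0 ≤ Bl := ge_of_tendsto' hBl hb0
    have hPl1 : 1 ≤ Pl := ge_of_tendsto' hPl hP1
    nlinarith
  · have heq : ∀ k, a k = (b k - t k) * P k := by
      intro k
      have : b k - t k = a k / P k := by simp only [hbdef]; ring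
      rw [this, div_mul_cancel₀ _ (hPpos k).ne']
    exact ((hBl.sub httends).mul hPl).congr (fun k => (heq k).symm)

lemma aux_opnorm {X : Type*} [NormedAddCommGroup X] [InnerProductSpace ℝ X]
    (B : X →ₗ[ℝ] X) (hsym : ∀ x y : X, ⟪B x, y⟫ = ⟪x, B y⟫)
    (hpos : ∀ x : X, 0 ≤ ⟪x, B x⟫) (Λ : ℝ) (hΛ : 0 ≤ Λ)
    (hub : ∀ x : X, ⟪x, B x⟫ ≤ Λ * ‖x‖ ^ 2) (v : X) : ‖B v‖ ≤ Λ * ‖v‖ := by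
  have h1 : ‖B v‖ ^ 2 = ⟪v, B (B v)⟫ := by
    rw [← hsym, real_inner_self_eq_norm_sq]
  have h2 := aux_inner_le B hsym hpos v (B v)
  have h3 : Real.sqrt ⟪v, B v⟫ ≤ Real.sqrt Λ * ‖v‖ := by
    calc Real.sqrt ⟪v, B v⟫ ≤ Real.sqrt (Λ * ‖v‖ ^ 2) := Real.sqrt_le_sqrt (hub v)
      _ = Real.sqrt Λ * ‖v‖ := by rw [Real.sqrt_mul hΛ, Real.sqrt_sq (norm_nonneg _)]
  have h4 : Real.sqrt ⟪B v, B (B v)⟫ ≤ Real.sqrt Λ * ‖B v‖ := by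
    calc Real.sqrt ⟪B v, B (B v)⟫ ≤ Real.sqrt (Λ * ‖B v‖ ^ 2) := Real.sqrt_le_sqrt (hub (B v))
      _ = _ := by rw [Real.sqrt_mul hΛ, Real.sqrt_sq (norm_nonneg _)]
  have h5 : ‖B v‖ ^ 2 ≤ (Real.sqrt Λ * ‖v‖) * (Real.sqrt Λ * ‖B v‖) := by
    rw [h1]
    calc ⟪v, B (B v)⟫ ≤ Real.sqrt ⟪v, B v⟫ * Real.sqrt ⟪B v, B (B v)⟫ := h2
      _ ≤ _ := mul_le_mul h3 h4 (Real.sqrt_nonneg _) (by positivity)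
  have hΛeq : Real.sqrt Λ * Real.sqrt Λ = Λ := Real.mul_self_sqrt hΛ
  rcases eq_or_lt_of_le (norm_nonneg (B v)) with h | h
  · rw [← h]; positivity
  · have h6 : ‖B v‖ * ‖B v‖ ≤ (Λ * ‖v‖) * ‖B v‖ := by
      have h7 : Real.sqrt Λ * ‖v‖ * (Real.sqrt Λ * ‖B v‖) = (Λ * ‖v‖) * ‖B v‖ := by
        calc Real.sqrt Λ * ‖v‖ * (Real.sqrt Λ * ‖B v‖)
            = (Real.sqrt Λ * Real.sqrt Λ) * (‖v‖ * ‖B v‖) := by ring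
          _ = Λ * (‖v‖ * ‖B v‖) := by rw [hΛeq]
          _ = (Λ * ‖v‖) * ‖B v‖ := by ring
      calc ‖B v‖ * ‖B v‖ = ‖B v‖ ^ 2 := (sq _).symm
        _ ≤ _ := h5
        _ = _ := h7
    exact le_of_mul_le_mul_right h6 h

open Filter in
/-- Global convergence of the preconditioned proximal point algorithm under
the summable-error criterion (A). -/
theorem stmt_3
    {X : Type*} [NormedAddCommGroup X] [InnerProductSpace ℝ X] [FiniteDimensional ℝ X]
    (T : X → Set X)
    (hmono : ∀ x y u v, u ∈ T x → v ∈ T y → 0 ≤ ⟪u - v, x - y⟫)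
    (hmax : ∀ S : X → Set X,
      (∀ x y u v, u ∈ S x → v ∈ S y → 0 ≤ ⟪u - v, x - y⟫) →
      (∀ x, T x ⊆ S x) → S = T)
    (Ω : Set X) (hΩ : Ω = {z | (0 : X) ∈ T z}) (hΩne : Ω.Nonempty)
    -- `c_k` bounded away from zero
    (c : ℕ → ℝ) (cmin : ℝ) (hcmin : 0 < cmin) (hc : ∀ k, cmin ≤ c k)
    -- self-adjoint positive definite preconditioners
    (M : ℕ → X →ₗ[ℝ] X)
    (hMsym : ∀ k (x y : X), ⟪M k x, y⟫ = ⟪x, M k y⟫)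
    (ν : ℕ → ℝ) (hν0 : ∀ k, 0 ≤ ν k) (hνsum : Summable ν)
    -- `(1 + ν_k) M_k ⪰ M_{k+1}`
    (hMdec : ∀ k (x : X), ⟪x, M (k + 1) x⟫ ≤ (1 + ν k) * ⟪x, M k x⟫)
    -- `M_k ⪰ λ_min I`
    (lmin : ℝ) (hlmin : 0 < lmin)
    (hMlb : ∀ k (x : X), lmin * ‖x‖ ^ 2 ≤ ⟪x, M k x⟫)
    -- `limsup λ_max(M_k) < ∞`, i.e. a uniform upper bound
    (Λ : ℝ) (hMub : ∀ k (x : X), ⟪x, M k x⟫ ≤ Λ * ‖x‖ ^ 2)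
    -- summable errors
    (ε : ℕ → ℝ) (hε0 : ∀ k, 0 ≤ ε k) (hεsum : Summable ε)
    -- weighted norm and distance
    (normM : (X →ₗ[ℝ] X) → X → ℝ)
    (hnormM : ∀ (B : X →ₗ[ℝ] X) (x : X), normM B x = Real.sqrt ⟪x, B x⟫)
    (distM : (X →ₗ[ℝ] X) → X → Set X → ℝ)
    (hdistM : ∀ (B : X →ₗ[ℝ] X) (x : X) (S : Set X),
      distM B x S = sInf ((fun w => normM B (x - w)) '' S))
    -- the iterates: `‖z^{k+1} - (M_k + c_k T)⁻¹ M_k z^k‖_{M_k} ≤ ε_k`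
    (z : ℕ → X)
    (hz : ∀ k, ∃ p : X, (∃ w ∈ T p, M k (z k) = M k p + c k • w) ∧
      normM (M k) (z (k + 1) - p) ≤ ε k) :
    Bornology.IsBounded (Set.range z) ∧
    (∀ k, distM (M (k + 1)) (z (k + 1)) Ω
      ≤ (1 + ν k) * distM (M k) (z k) Ω + (1 + ν k) * ε k) ∧
    ∃ zinf : X, Filter.Tendsto z Filter.atTop (nhds zinf) ∧ (0 : X) ∈ T zinf := by
  obtain ⟨s₀, hs₀Ω⟩ := hΩne
  have hΩmem : ∀ s, s ∈ Ω ↔ (0 : X) ∈ T s := by intro s; rw [hΩ]; rfl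
  have hs₀ : (0 : X) ∈ T s₀ := (hΩmem s₀).1 hs₀Ω
  choose p hpw hperr using hz
  choose w hwT hweq using hpw
  -- basic facts
  have hposM : ∀ k (x : X), 0 ≤ ⟪x, M k x⟫ := fun k x =>
    le_trans (by positivity) (hMlb k x)
  set Λ' : ℝ := max Λ 0 with hΛ'def
  have hΛ'0 : (0 : ℝ) ≤ Λ' := le_max_right _ _
  have hMub' : ∀ k (x : X), ⟪x, M k x⟫ ≤ Λ' * ‖x‖ ^ 2 := fun k x =>
    le_trans (hMub k x)
      (mul_le_mul_of_nonneg_right (le_max_left _ _) (sq_nonneg _))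
  set N : ℕ → X → ℝ := fun k x => Real.sqrt ⟪x, M k x⟫ with hNdef
  have hN0 : ∀ k (x : X), 0 ≤ N k x := fun k x => Real.sqrt_nonneg _
  have hNnormM : ∀ k (x : X), normM (M k) x = N k x := fun k x => hnormM _ _
  have hck : ∀ k, 0 < c k := fun k => lt_of_lt_of_le hcmin (hc k)
  have hlbN : ∀ k (x : X), Real.sqrt lmin * ‖x‖ ≤ N k x := by
    intro k x
    simp only [hNdef]
    calc Real.sqrt lmin * ‖x‖ = Real.sqrt (lmin * ‖x‖ ^ 2) := by
          rw [Real.sqrt_mul hlmin.le, Real.sqrt_sq (norm_nonneg _)]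
      _ ≤ _ := Real.sqrt_le_sqrt (hMlb k x)
  have hubN : ∀ k (x : X), N k x ≤ Real.sqrt Λ' * ‖x‖ := by
    intro k x
    simp only [hNdef]
    calc Real.sqrt ⟪x, M k x⟫ ≤ Real.sqrt (Λ' * ‖x‖ ^ 2) := Real.sqrt_le_sqrt (hMub' k x)
      _ = _ := by rw [Real.sqrt_mul hΛ'0, Real.sqrt_sq (norm_nonneg _)]
  -- firm nonexpansiveness
  have hMzp : ∀ k, M k (z k - p k) = c k • w k := by
    intro k
    rw [map_sub, hweq k]
    abel
  have hfirm : ∀ k s, (0 : X) ∈ T s →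
      ⟪p k - s, M k (p k - s)⟫ + ⟪z k - p k, M k (z k - p k)⟫
        ≤ ⟪z k - s, M k (z k - s)⟫ := by
    intro k s hs
    have hiner : 0 ≤ ⟪z k - p k, M k (p k - s)⟫ := by
      have h1 : ⟪z k - p k, M k (p k - s)⟫ = ⟪M k (z k - p k), p k - s⟫ :=
        (hMsym k (z k - p k) (p k - s)).symm
      rw [h1, hMzp k, real_inner_smul_left]
      have h2 := hmono (p k) s (w k) 0 (hwT k) hs
      simp only [sub_zero] at h2
      exact mul_nonneg (hck k).le h2
    have hsplit : z k - s = (z k - p k) + (p k - s) := by abel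
    rw [hsplit, aux_expand (M k) (hMsym k)]
    linarith
  have hps : ∀ k s, (0 : X) ∈ T s → N k (p k - s) ≤ N k (z k - s) := by
    intro k s hs
    have hf := hfirm k s hs
    simp only [hNdef]
    apply Real.sqrt_le_sqrt
    linarith [hposM k (z k - p k)]
  have htriA : ∀ k s, N k (z (k + 1) - s) ≤ ε k + N k (p k - s) := by
    intro k s
    have hsplit : z (k + 1) - s = (z (k + 1) - p k) + (p k - s) := by abel
    have htri := aux_tri (M k) (hMsym k) (hposM k) (z (k + 1) - p k) (p k - s)
    have herr : N k (z (k + 1) - p k) ≤ ε k := by rw [← hNnormM]; exact hperr k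
    simp only [hNdef] at htri herr ⊢
    rw [hsplit]
    linarith
  have hstep2 : ∀ k (x : X), N (k + 1) x ≤ (1 + ν k) * N k x := by
    intro k x
    simp only [hNdef]
    have h1 : Real.sqrt ⟪x, M (k + 1) x⟫ ≤ Real.sqrt ((1 + ν k) * ⟪x, M k x⟫) :=
      Real.sqrt_le_sqrt (hMdec k x)
    rw [Real.sqrt_mul (by linarith [hν0 k])] at h1
    have h2 : Real.sqrt (1 + ν k) ≤ 1 + ν k := by
      have h3 : (1 : ℝ) + ν k ≤ (1 + ν k) ^ 2 := by nlinarith [hν0 k]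
      calc Real.sqrt (1 + ν k) ≤ Real.sqrt ((1 + ν k) ^ 2) := Real.sqrt_le_sqrt h3
        _ = 1 + ν k := Real.sqrt_sq (by linarith [hν0 k])
    calc Real.sqrt ⟪x, M (k + 1) x⟫ ≤ Real.sqrt (1 + ν k) * Real.sqrt ⟪x, M k x⟫ := h1
      _ ≤ (1 + ν k) * Real.sqrt ⟪x, M k x⟫ :=
        mul_le_mul_of_nonneg_right h2 (Real.sqrt_nonneg _)
  have hineqA : ∀ k s, (0 : X) ∈ T s →
      N (k + 1) (z (k + 1) - s) ≤ (1 + ν k) * N k (z k - s) + (1 + ν k) * ε k := by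
    intro k s hs
    have hpos : (0 : ℝ) ≤ 1 + ν k := by linarith [hν0 k]
    have h2 : N k (z (k + 1) - s) ≤ ε k + N k (z k - s) :=
      (htriA k s).trans (by linarith [hps k s hs])
    calc N (k + 1) (z (k + 1) - s) ≤ (1 + ν k) * N k (z (k + 1) - s) := hstep2 k _
      _ ≤ (1 + ν k) * (ε k + N k (z k - s)) := mul_le_mul_of_nonneg_left h2 hpos
      _ = (1 + ν k) * N k (z k - s) + (1 + ν k) * ε k := by ring
  -- summability of the perturbation
  have hδ0 : ∀ k, 0 ≤ (1 + ν k) * ε k := fun k =>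
    mul_nonneg (by linarith [hν0 k]) (hε0 k)
  have hδsum : Summable (fun k => (1 + ν k) * ε k) := by
    apply Summable.of_nonneg_of_le hδ0 (fun k => ?_) (hεsum.mul_left (1 + ∑' i, ν i))
    have hνk : ν k ≤ ∑' i, ν i := Summable.le_tsum hνsum k (fun j _ => hν0 j)
    exact mul_le_mul_of_nonneg_right (by linarith) (hε0 k)
  -- quasi-Fejér for the base point s₀
  obtain ⟨L, hL0, hLt⟩ := aux_qf (fun k => N k (z k - s₀)) ν (fun k => (1 + ν k) * ε k)
    (fun k => hN0 k _) hν0 hδ0 hνsum hδsum (fun k => hineqA k s₀ hs₀)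
  -- Part 1: boundedness
  obtain ⟨C, hC⟩ := hLt.bddAbove_range
  have hCk : ∀ k, N k (z k - s₀) ≤ C := fun k => hC (Set.mem_range_self k)
  have hsl : 0 < Real.sqrt lmin := Real.sqrt_pos.2 hlmin
  have hzbound : ∀ k, ‖z k‖ ≤ ‖s₀‖ + C / Real.sqrt lmin := by
    intro k
    have h1 : Real.sqrt lmin * ‖z k - s₀‖ ≤ N k (z k - s₀) := hlbN k _
    have h2 : ‖z k - s₀‖ ≤ C / Real.sqrt lmin := by
      rw [le_div_iff₀ hsl]
      nlinarith [hCk k]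
    have h3 : ‖z k‖ - ‖s₀‖ ≤ ‖z k - s₀‖ := norm_sub_norm_le _ _
    linarith
  have hbdd : Bornology.IsBounded (Set.range z) :=
    isBounded_iff_forall_norm_le.2 ⟨_, by rintro x ⟨k, rfl⟩; exact hzbound k⟩
  -- Part 2: the distance inequality
  have hpart2 : ∀ k, distM (M (k + 1)) (z (k + 1)) Ω
      ≤ (1 + ν k) * distM (M k) (z k) Ω + (1 + ν k) * ε k := by
    intro k
    have hνk : (0 : ℝ) < 1 + ν k := by linarith [hν0 k]
    have hbdd1 : BddBelow ((fun s => normM (M (k + 1)) (z (k + 1) - s)) '' Ω) := by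
      refine ⟨0, ?_⟩
      rintro y ⟨s, hs, rfl⟩
      show (0:ℝ) ≤ normM (M (k + 1)) (z (k + 1) - s)
      rw [hnormM]
      exact Real.sqrt_nonneg _
    have h1 : ∀ s ∈ Ω, distM (M (k + 1)) (z (k + 1)) Ω
        ≤ (1 + ν k) * normM (M k) (z k - s) + (1 + ν k) * ε k := by
      intro s hs
      rw [hdistM]
      calc sInf ((fun s => normM (M (k + 1)) (z (k + 1) - s)) '' Ω)
          ≤ normM (M (k + 1)) (z (k + 1) - s) :=
            csInf_le hbdd1 (Set.mem_image_of_mem _ hs)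
        _ ≤ _ := by
            rw [hNnormM, hNnormM]
            exact hineqA k s ((hΩmem s).1 hs)
    have h2 : (distM (M (k + 1)) (z (k + 1)) Ω - (1 + ν k) * ε k) / (1 + ν k)
        ≤ distM (M k) (z k) Ω := by
      rw [hdistM (M k) (z k) Ω]
      apply le_csInf ⟨_, Set.mem_image_of_mem (fun w => normM (M k) (z k - w)) hs₀Ω⟩
      rintro y ⟨s, hs, rfl⟩
      show _ ≤ normM (M k) (z k - s)
      rw [div_le_iff₀ hνk]
      have h3 := h1 s hs
      nlinarith
    rw [div_le_iff₀ hνk] at h2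
    nlinarith
  -- Part 3: convergence
  have hν0' : Tendsto ν atTop (nhds 0) := hνsum.tendsto_atTop_zero
  have hε0' : Tendsto ε atTop (nhds 0) := hεsum.tendsto_atTop_zero
  have hgle : ∀ k, max (N (k + 1) (z (k + 1) - s₀) / (1 + ν k) - ε k) 0
      ≤ N k (p k - s₀) := by
    intro k
    apply max_le _ (hN0 k _)
    have hpos : (0 : ℝ) < 1 + ν k := by linarith [hν0 k]
    rw [sub_le_iff_le_add, div_le_iff₀ hpos]
    have h1 : N (k + 1) (z (k + 1) - s₀) ≤ (1 + ν k) * N k (z (k + 1) - s₀) := hstep2 k _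
    have h2 : N k (z (k + 1) - s₀) ≤ ε k + N k (p k - s₀) := htriA k s₀
    nlinarith [mul_le_mul_of_nonneg_left h2 hpos.le]
  have hgtend : Tendsto (fun k => max (N (k + 1) (z (k + 1) - s₀) / (1 + ν k) - ε k) 0)
      atTop (nhds L) := by
    have ha1 : Tendsto (fun k => N (k + 1) (z (k + 1) - s₀)) atTop (nhds L) :=
      hLt.comp (tendsto_add_atTop_nat 1)
    have hd : Tendsto (fun k => (1 : ℝ) + ν k) atTop (nhds 1) := by
      have := (tendsto_const_nhds (x := (1:ℝ)) (f := atTop)).add hν0'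
      simpa using this
    have h1 : Tendsto (fun k => N (k + 1) (z (k + 1) - s₀) / (1 + ν k) - ε k)
        atTop (nhds L) := by
      have := (ha1.div hd one_ne_zero).sub hε0'
      simpa using this
    have h2 := h1.max (tendsto_const_nhds (x := (0:ℝ)))
    rwa [max_eq_left hL0] at h2
  have htq0 : Tendsto (fun k => ⟪z k - p k, M k (z k - p k)⟫) atTop (nhds 0) := by
    refine squeeze_zero (g := fun k => N k (z k - s₀) * N k (z k - s₀)
        - max (N (k + 1) (z (k + 1) - s₀) / (1 + ν k) - ε k) 0
          * max (N (k + 1) (z (k + 1) - s₀) / (1 + ν k) - ε k) 0)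
      (fun k => hposM k _) (fun k => ?_) ?_
    · have hf := hfirm k s₀ hs₀
      have hq : ⟪z k - s₀, M k (z k - s₀)⟫ = N k (z k - s₀) * N k (z k - s₀) := by
        simp only [hNdef]
        rw [Real.mul_self_sqrt (hposM k _)]
      have hg2 : max (N (k + 1) (z (k + 1) - s₀) / (1 + ν k) - ε k) 0
            * max (N (k + 1) (z (k + 1) - s₀) / (1 + ν k) - ε k) 0
          ≤ ⟪p k - s₀, M k (p k - s₀)⟫ := by
        have hm := mul_self_le_mul_self (le_max_right _ _) (hgle k)
        have hNN : N k (p k - s₀) * N k (p k - s₀) = ⟪p k - s₀, M k (p k - s₀)⟫ := by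
          simp only [hNdef]
          exact Real.mul_self_sqrt (hposM k _)
        linarith
      linarith
    · have h1 := (hLt.mul hLt).sub (hgtend.mul hgtend)
      simpa using h1
  have hzp0 : Tendsto (fun k => z k - p k) atTop (nhds 0) := by
    rw [tendsto_zero_iff_norm_tendsto_zero]
    refine squeeze_zero (g := fun k => Real.sqrt ⟪z k - p k, M k (z k - p k)⟫ / Real.sqrt lmin)
      (fun k => norm_nonneg _) (fun k => ?_) ?_
    · have h1 := hlbN k (z k - p k)
      simp only [hNdef] at h1
      rw [le_div_iff₀ hsl]
      nlinarith
    · have h1 : Tendsto (fun k => Real.sqrt ⟪z k - p k, M k (z k - p k)⟫) atTop (nhds 0) := by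
        have := (Real.continuous_sqrt.tendsto 0).comp htq0
        simpa [Function.comp_def] using this
      simpa using h1.div_const (Real.sqrt lmin)
  have hw0 : Tendsto w atTop (nhds 0) := by
    rw [tendsto_zero_iff_norm_tendsto_zero]
    refine squeeze_zero (g := fun k => (Λ' / cmin) * ‖z k - p k‖)
      (fun k => norm_nonneg _) (fun k => ?_) ?_
    · show ‖w k‖ ≤ Λ' / cmin * ‖z k - p k‖
      have h1 : c k * ‖w k‖ = ‖M k (z k - p k)‖ := by
        rw [hMzp k, norm_smul]
        simp [abs_of_pos (hck k)]
      have h2 : ‖M k (z k - p k)‖ ≤ Λ' * ‖z k - p k‖ :=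
        aux_opnorm (M k) (hMsym k) (hposM k) Λ' hΛ'0 (hMub' k) _
      have h3 : cmin * ‖w k‖ ≤ c k * ‖w k‖ :=
        mul_le_mul_of_nonneg_right (hc k) (norm_nonneg _)
      rw [div_mul_eq_mul_div, le_div_iff₀ hcmin]
      nlinarith
    · have h1 := (tendsto_zero_iff_norm_tendsto_zero.1 hzp0).const_mul (Λ' / cmin)
      simpa using h1
  obtain ⟨zinf, -, φ, hφ, hzφ⟩ :=
    tendsto_subseq_of_bounded hbdd (fun n => Set.mem_range_self (f := z) n)
  have hpφ : Tendsto (fun k => p (φ k)) atTop (nhds zinf) := by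
    have h1 := hzφ.sub (hzp0.comp hφ.tendsto_atTop)
    simp only [Function.comp] at h1 ⊢
    simpa [sub_sub_cancel] using h1
  have hwφ : Tendsto (fun k => w (φ k)) atTop (nhds 0) := hw0.comp hφ.tendsto_atTop
  have hTzinf : (0 : X) ∈ T zinf := by
    have hST := hmax (fun x => T x ∪ {u | x = zinf ∧ u = 0}) ?_ (fun x => Set.subset_union_left)
    · rw [← hST]
      exact Set.mem_union_right _ ⟨rfl, rfl⟩
    · intro x y u v hu hv
      rcases hu with hu | ⟨hx, hu0⟩ <;> rcases hv with hv | ⟨hy, hv0⟩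
      · exact hmono x y u v hu hv
      · rw [hy, hv0]
        have hk : ∀ k, 0 ≤ ⟪u - w (φ k), x - p (φ k)⟫ := fun k =>
          hmono x (p (φ k)) u (w (φ k)) hu (hwT _)
        have hlim : Tendsto (fun k => ⟪u - w (φ k), x - p (φ k)⟫) atTop
            (nhds ⟪u - (0 : X), x - zinf⟫) :=
          (tendsto_const_nhds.sub hwφ).inner (tendsto_const_nhds.sub hpφ)
        exact ge_of_tendsto' hlim hk
      · rw [hx, hu0]
        have hk : ∀ k, 0 ≤ ⟪w (φ k) - v, p (φ k) - y⟫ := fun k =>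
          hmono (p (φ k)) y (w (φ k)) v (hwT _) hv
        have hlim : Tendsto (fun k => ⟪w (φ k) - v, p (φ k) - y⟫) atTop
            (nhds ⟪(0 : X) - v, zinf - y⟫) :=
          (hwφ.sub tendsto_const_nhds).inner (hpφ.sub tendsto_const_nhds)
        exact ge_of_tendsto' hlim hk
      · rw [hx, hy, hu0, hv0]
        simp
  obtain ⟨L₂, hL₂0, hL₂⟩ := aux_qf (fun k => N k (z k - zinf)) ν (fun k => (1 + ν k) * ε k)
    (fun k => hN0 k _) hν0 hδ0 hνsum hδsum (fun k => hineqA k zinf hTzinf)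
  have hAφ : Tendsto (fun k => N (φ k) (z (φ k) - zinf)) atTop (nhds 0) := by
    refine squeeze_zero (g := fun k => Real.sqrt Λ' * ‖z (φ k) - zinf‖)
      (fun k => hN0 _ _) (fun k => hubN (φ k) _) ?_
    have hnorm0 : Tendsto (fun k => ‖z (φ k) - zinf‖) atTop (nhds 0) := by
      have := tendsto_iff_norm_sub_tendsto_zero.1 hzφ
      simpa [Function.comp] using this
    have := hnorm0.const_mul (Real.sqrt Λ')
    simpa using this
  have hL₂eq : L₂ = 0 :=
    tendsto_nhds_unique ((hL₂.comp hφ.tendsto_atTop).congr (fun k => rfl)) hAφ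
  rw [hL₂eq] at hL₂
  have hconv : Tendsto z atTop (nhds zinf) := by
    rw [tendsto_iff_norm_sub_tendsto_zero]
    refine squeeze_zero (g := fun k => N k (z k - zinf) / Real.sqrt lmin)
      (fun k => norm_nonneg _) (fun k => ?_) ?_
    · have h1 := hlbN k (z k - zinf)
      rw [le_div_iff₀ hsl]
      nlinarith
    · simpa using hL₂.div_const (Real.sqrt lmin)
  exact ⟨hbdd, hpart2, zinf, hconv, hTzinf⟩
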